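/- arXiv:2004.01587 — 5 statements merged into one kernel-verified Lean document; each statement's English description precedes it below -/
import Mathlib

section
/- Let (X,d) be a compact, totally disconnected metric space with at least two points. If X is c-uniformly perfect for some c>1 and (η,r₀)-quasi-self-similar for some distortion homeomorphism η and some r₀>0, then X is uniformly disconnected, i.e. there exists C≥1 such that X is C-uniformly disconnected. -/
open Metric Set

/-- A distortion function: an increasing self-homeomorphism of `[0,∞)`
(an increasing bijection of `[0,∞)` onto itself, which is automatically a homeomorphism). -/
structure IsDistortion (η : ℝ → ℝ) : Prop where
  bijOn : Set.BijOn η (Set.Ici 0) (Set.Ici 0)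
  strictMonoOn : StrictMonoOn η (Set.Ici 0)

/-- `f` is an `η`-quasisymmetric embedding on the set `S`:
`f` is injective on `S` and `d(f x, f a) / d(f x, f b) ≤ η (d(x,a) / d(x,b))`
for all `x, a, b ∈ S` with `x ≠ b`. -/
def IsQSOn {α β : Type*} [PseudoMetricSpace α] [PseudoMetricSpace β]
    (η : ℝ → ℝ) (f : α → β) (S : Set α) : Prop :=
  Set.InjOn f S ∧ ∀ x ∈ S, ∀ a ∈ S, ∀ b ∈ S, x ≠ b →
    dist (f x) (f a) ≤ η (dist x a / dist x b) * dist (f x) (f b)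

/-- The metric space `X` is `c`-uniformly perfect: for every `x ∈ X` and every
`r ∈ (0, diam X)`, the set `B(x,r) \ B(x, r/c)` is nonempty. -/
def UniformlyPerfect (X : Type*) [MetricSpace X] (c : ℝ) : Prop :=
  ∀ x : X, ∀ r : ℝ, 0 < r → r < Metric.diam (Set.univ : Set X) →
    ∃ y : X, dist y x < r ∧ r / c ≤ dist y x

/-- The metric space `X` is `C`-uniformly disconnected: for every `x ∈ X` and every
`r ∈ (0, diam X)` there is a set `E ∋ x` with `diam E ≤ r` and `dist(E, X \ E) ≥ r / C`. -/
def UniformlyDisconnected (X : Type*) [MetricSpace X] (C : ℝ) : Prop :=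
  ∀ x : X, ∀ r : ℝ, 0 < r → r < Metric.diam (Set.univ : Set X) →
    ∃ E : Set X, x ∈ E ∧ Metric.diam E ≤ r ∧
      ∀ a ∈ E, ∀ b ∉ E, r / C ≤ dist a b

/-- The metric space `X` is `(η, r₀)`-quasi-self-similar: for every `x ∈ X` and every
`r ∈ (0, diam X)` there is an `η`-quasisymmetric embedding `φ : B(x,r) → X` with
`B(φ x, r₀) ⊆ φ (B(x,r))`. -/
def QuasiSelfSimilar (X : Type*) [MetricSpace X] (η : ℝ → ℝ) (r₀ : ℝ) : Prop :=
  ∀ x : X, ∀ r : ℝ, 0 < r → r < Metric.diam (Set.univ : Set X) →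
    ∃ φ : X → X, IsQSOn η φ (Metric.ball x r) ∧
      Metric.ball (φ x) r₀ ⊆ φ '' Metric.ball x r


section DistortionFacts
variable {η : ℝ → ℝ}

lemma IsDistortion.map_zero (hη : IsDistortion η) : η 0 = 0 := by
  obtain ⟨t, ht, hteq⟩ := hη.bijOn.surjOn (self_mem_Ici (a := (0:ℝ)))
  rcases eq_or_lt_of_le (show (0:ℝ) ≤ t from ht) with h | h
  · rw [← h] at hteq; exact hteq
  · have h1 : η 0 < η t := hη.strictMonoOn self_mem_Ici ht h
    have h0 : (0:ℝ) ≤ η 0 := hη.bijOn.mapsTo self_mem_Ici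
    rw [hteq] at h1; linarith

lemma IsDistortion.nonneg (hη : IsDistortion η) {t : ℝ} (ht : 0 ≤ t) : 0 ≤ η t :=
  hη.bijOn.mapsTo ht

lemma IsDistortion.exists_inv (hη : IsDistortion η) {s : ℝ} (hs : 0 < s) :
    ∃ t : ℝ, 0 < t ∧ η t = s := by
  obtain ⟨t, ht, hteq⟩ := hη.bijOn.surjOn (show s ∈ Ici 0 from hs.le)
  refine ⟨t, ?_, hteq⟩
  rcases eq_or_lt_of_le (show (0:ℝ) ≤ t from ht) with h | h
  · exfalso; rw [← h, hη.map_zero] at hteq; linarith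
  · exact h

lemma IsDistortion.le_of_map_le (hη : IsDistortion η) {q t : ℝ} (hq : 0 ≤ q) (ht : 0 ≤ t)
    (h : η t ≤ η q) : t ≤ q := by
  by_contra h'
  push_neg at h'
  exact absurd (hη.strictMonoOn hq ht h') (not_lt.2 h)

lemma IsDistortion.mono (hη : IsDistortion η) {q t : ℝ} (hq : 0 ≤ q) (ht : 0 ≤ t)
    (h : q ≤ t) : η q ≤ η t :=
  hη.strictMonoOn.monotoneOn hq ht h

end DistortionFacts

lemma clopen_sep {X : Type*} [MetricSpace X] [CompactSpace X] {s : Set X} (hs : IsClopen s) :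
    ∃ δ : ℝ, 0 < δ ∧ ∀ u ∈ s, ∀ v ∉ s, δ ≤ dist u v := by
  rcases eq_empty_or_nonempty s with h | hne
  · exact ⟨1, one_pos, by simp [h]⟩
  rcases eq_empty_or_nonempty sᶜ with h | hcne
  · refine ⟨1, one_pos, fun u hu v hv => absurd ?_ hv⟩
    by_contra h'
    exact (eq_empty_iff_forall_notMem.1 h) v h'
  have hsc : IsCompact s := hs.1.isCompact
  have hcl : IsClosed sᶜ := hs.2.isClosed_compl
  obtain ⟨u₀, hu₀, hmin⟩ := hsc.exists_isMinOn hne (continuous_infDist_pt sᶜ).continuousOn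
  refine ⟨infDist u₀ sᶜ, ?_, ?_⟩
  · exact (hcl.notMem_iff_infDist_pos hcne).1 (by simpa using hu₀)
  · intro u hu v hv
    exact le_trans (hmin hu) (infDist_le_dist_of_mem hv)

lemma scale_sep {X : Type*} [MetricSpace X] [CompactSpace X] [TotallyDisconnectedSpace X]
    [Nonempty X] {ε : ℝ} (hε : 0 < ε) :
    ∃ δ : ℝ, 0 < δ ∧ ∀ y : X, ∃ F : Set X, y ∈ F ∧ Metric.diam F ≤ ε ∧
      ∀ u ∈ F, ∀ v ∉ F, δ ≤ dist u v := by
  classical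
  have hU : ∀ y : X, ∃ V : Set X, IsClopen V ∧ y ∈ V ∧ V ⊆ ball y (ε / 2) := fun y =>
    compact_exists_isClopen_in_isOpen isOpen_ball (mem_ball_self (by positivity))
  choose U hUc hUm hUb using hU
  have hcover : (univ : Set X) ⊆ ⋃ y, U y := fun y _ => mem_iUnion.2 ⟨y, hUm y⟩
  obtain ⟨t, ht⟩ := isCompact_univ.elim_finite_subcover U (fun y => (hUc y).2) hcover
  have htne : t.Nonempty := by
    obtain ⟨y⟩ := ‹Nonempty X›
    rcases mem_iUnion₂.1 (ht (mem_univ y)) with ⟨i, hi, _⟩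
    exact ⟨i, hi⟩
  choose δf hδf hsep using fun i : X => clopen_sep (hUc i)
  refine ⟨t.inf' htne δf, ?_, ?_⟩
  · exact (Finset.lt_inf'_iff htne).2 fun i _ => hδf i
  · intro y
    refine ⟨⋂ i ∈ t, if y ∈ U i then U i else (U i)ᶜ, ?_, ?_, ?_⟩
    · simp only [mem_iInter]
      intro i _
      split_ifs with h
      · exact h
      · exact h
    · rcases mem_iUnion₂.1 (ht (mem_univ y)) with ⟨i₀, hi₀t, hyi₀⟩
      have hsub : (⋂ i ∈ t, if y ∈ U i then U i else (U i)ᶜ) ⊆ U i₀ := by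
        refine (biInter_subset_of_mem hi₀t).trans ?_
        rw [if_pos hyi₀]
      calc Metric.diam (⋂ i ∈ t, if y ∈ U i then U i else (U i)ᶜ)
          ≤ Metric.diam (ball i₀ (ε / 2)) :=
            Metric.diam_mono (hsub.trans (hUb i₀)) isBounded_ball
        _ ≤ 2 * (ε / 2) := Metric.diam_ball (by positivity)
        _ = ε := by ring
    · intro u hu v hv
      simp only [mem_iInter, not_forall] at hv
      obtain ⟨i, hit, hvi⟩ := hv
      have hui : u ∈ (if y ∈ U i then U i else (U i)ᶜ) := by
        simp only [mem_iInter] at hu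
        exact hu i hit
      have hle : t.inf' htne δf ≤ δf i := Finset.inf'_le _ hit
      by_cases hy : y ∈ U i
      · rw [if_pos hy] at hui hvi
        exact hle.trans (hsep i u hui v hvi)
      · rw [if_neg hy] at hui hvi
        rw [dist_comm]
        exact hle.trans (hsep i v (not_not.1 hvi) u hui)

/-- If a compact, totally disconnected metric space with at least two points is
`c`-uniformly perfect (`c > 1`) and `(η, r₀)`-quasi-self-similar, then it is uniformly
disconnected. -/
theorem uniformlyDisconnected_of_quasiSelfSimilar
    (X : Type*) [MetricSpace X] [CompactSpace X] [TotallyDisconnectedSpace X] [Nontrivial X]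
    (c : ℝ) (hc : 1 < c) (hup : UniformlyPerfect X c)
    (η : ℝ → ℝ) (hη : IsDistortion η) (r₀ : ℝ) (hr₀ : 0 < r₀)
    (hqss : QuasiSelfSimilar X η r₀) :
    ∃ C : ℝ, 1 ≤ C ∧ UniformlyDisconnected X C := by
  have hc0 : (0:ℝ) < c := lt_trans one_pos hc
  -- the diameter is positive
  set D := Metric.diam (univ : Set X) with hDdef
  clear_value D
  have hbdd : Bornology.IsBounded (univ : Set X) := isCompact_univ.isBounded
  have hD : 0 < D := by
    rw [hDdef]
    obtain ⟨p, q, hpq⟩ := exists_pair_ne X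
    have h1 : 0 < dist p q := dist_pos.2 hpq
    exact lt_of_lt_of_le h1 (dist_le_diam_of_mem hbdd (mem_univ p) (mem_univ q))
  -- global constants
  set r₁ : ℝ := min r₀ (D / 2) with hr₁def
  clear_value r₁
  have hr₁ : 0 < r₁ := by rw [hr₁def]; exact lt_min hr₀ (half_pos hD)
  have hr₁D : r₁ ≤ D / 2 := by rw [hr₁def]; exact min_le_right _ _
  have hr₁r₀ : r₁ ≤ r₀ := by rw [hr₁def]; exact min_le_left _ _
  obtain ⟨κ₁', hκ₁'pos, hκ₁'⟩ := hη.exists_inv (div_pos hr₁ (mul_pos hc0 hD))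
  set κ₁ : ℝ := κ₁' / c with hκ₁def
  clear_value κ₁
  have hκ₁pos : 0 < κ₁ := by rw [hκ₁def]; exact div_pos hκ₁'pos hc0
  set T : ℝ := max 4 (2 / κ₁) with hTdef
  clear_value T
  have hT4 : (4:ℝ) ≤ T := by rw [hTdef]; exact le_max_left _ _
  have hTκ : 2 / κ₁ ≤ T := by rw [hTdef]; exact le_max_right _ _
  have hT0 : (0:ℝ) < T := lt_of_lt_of_le (by norm_num) hT4
  set M : ℝ := max (η T) 1 with hMdef
  clear_value M
  have hM1 : (1:ℝ) ≤ M := by rw [hMdef]; exact le_max_right _ _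
  have hMη : η T ≤ M := by rw [hMdef]; exact le_max_left _ _
  have hM0 : (0:ℝ) < M := lt_of_lt_of_le one_pos hM1
  set ε₀ : ℝ := r₁ / (2 * c * M) with hε₀def
  clear_value ε₀
  have hε₀pos : 0 < ε₀ := by
    rw [hε₀def]; exact div_pos hr₁ (mul_pos (mul_pos two_pos hc0) hM0)
  have hε₀r₁ : ε₀ ≤ r₁ := by
    rw [hε₀def]
    apply div_le_self hr₁.le
    linarith [mul_le_mul hc.le hM1 zero_le_one hc0.le]
  obtain ⟨δ₀, hδ₀, hsepX⟩ := scale_sep (X := X) hε₀pos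
  obtain ⟨κ₂, hκ₂pos, hκ₂⟩ := hη.exists_inv (show 0 < δ₀ / (2 * r₁) from div_pos hδ₀ (by linarith))
  set C : ℝ := max 4 (4 / (κ₁ * κ₂)) with hCdef
  clear_value C
  have hC4 : (4:ℝ) ≤ C := by rw [hCdef]; exact le_max_left _ _
  have hCκ : 4 / (κ₁ * κ₂) ≤ C := by rw [hCdef]; exact le_max_right _ _
  have hC0 : (0:ℝ) < C := lt_of_lt_of_le (by norm_num) hC4
  refine ⟨C, le_trans (by norm_num) hC4, ?_⟩
  intro x r hr hrD
  rw [← hDdef] at hrD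
  set ρ : ℝ := r / 2 with hρdef
  clear_value ρ
  have hρ : 0 < ρ := by rw [hρdef]; exact half_pos hr
  have hρD : ρ < D := lt_trans (by rw [hρdef]; linarith) hrD
  have hρD' : ρ < Metric.diam (univ : Set X) := by rw [← hDdef]; exact hρD
  obtain ⟨φ, ⟨hinj, hqs⟩, himg⟩ := hqss x ρ hρ hρD'
  have hxB : x ∈ ball x ρ := mem_ball_self hρ
  -- find b' in the ball whose image is far from φ x
  obtain ⟨y, hy1, hy2⟩ := hup (φ x) r₁ hr₁ (by rw [← hDdef]; linarith)
  have hyim : y ∈ φ '' ball x ρ := himg (mem_ball.2 (lt_of_lt_of_le hy1 hr₁r₀))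
  obtain ⟨b', hb'B, hb'⟩ := hyim
  have himgb' : r₁ / c ≤ dist (φ x) (φ b') := by rw [hb', dist_comm]; exact hy2
  have himgb'' : dist (φ x) (φ b') < r₁ := by rw [hb', dist_comm]; exact hy1
  -- find w in the ball at definite distance from x
  obtain ⟨w, hw1, hw2⟩ := hup x ρ hρ hρD'
  have hwB : w ∈ ball x ρ := mem_ball.2 hw1
  have hxw : x ≠ w := by
    intro h
    rw [← h, dist_self] at hw2
    have : 0 < ρ / c := div_pos hρ hc0
    linarith
  have hxwd : ρ / c ≤ dist x w := by rw [dist_comm]; exact hw2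
  have hxwd0 : 0 < dist x w := lt_of_lt_of_le (div_pos hρ hc0) hxwd
  -- Claim 1 : ρ * κ₁ ≤ dist x b'
  have claim1 : ρ * κ₁ ≤ dist x b' := by
    have h1 := hqs x hxB b' hb'B w hwB hxw
    have hφw : dist (φ x) (φ w) ≤ D := by
      rw [hDdef]; exact dist_le_diam_of_mem hbdd (mem_univ _) (mem_univ _)
    set q : ℝ := dist x b' / dist x w with hqdef
    have hq0 : 0 ≤ q := by positivity
    have hηq0 : 0 ≤ η q := hη.nonneg hq0
    have h2 : r₁ / c ≤ η q * D := by
      calc r₁ / c ≤ dist (φ x) (φ b') := himgb'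
        _ ≤ η q * dist (φ x) (φ w) := h1
        _ ≤ η q * D := mul_le_mul_of_nonneg_left hφw hηq0
    have h3 : η κ₁' ≤ η q := by
      rw [hκ₁', div_le_iff₀ (mul_pos hc0 hD)]
      rw [div_le_iff₀ hc0] at h2
      calc r₁ ≤ η q * D * c := h2
        _ = η q * (c * D) := by ring
    have h4 : κ₁' ≤ q := hη.le_of_map_le hq0 hκ₁'pos.le h3
    rw [hqdef, le_div_iff₀ hxwd0] at h4
    calc ρ * κ₁ = κ₁' * (ρ / c) := by rw [hκ₁def]; ring
      _ ≤ κ₁' * dist x w := mul_le_mul_of_nonneg_left hxwd hκ₁'pos.le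
      _ ≤ dist x b' := h4
  -- the separated piece around φ x
  obtain ⟨F, hxF, hFdiam, hFsep⟩ := hsepX (φ x)
  have hFbdd : Bornology.IsBounded F := hbdd.subset (subset_univ F)
  set E : Set X := ball x ρ ∩ φ ⁻¹' F with hEdef
  have hxE : x ∈ E := ⟨hxB, hxF⟩
  -- Claim 2 : points of E are close to x
  have claim2 : ∀ a ∈ E, dist x a ≤ ρ / T := by
    intro a ha
    by_contra hcon
    push_neg at hcon
    have hxa0 : 0 < dist x a := lt_of_le_of_lt (le_of_lt (div_pos hρ hT0)) hcon
    have hxa : x ≠ a := by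
      intro h
      rw [← h, dist_self] at hxa0
      exact lt_irrefl 0 hxa0
    have h2 := hqs x hxB b' hb'B a ha.1 hxa
    have hφa : dist (φ x) (φ a) ≤ ε₀ :=
      le_trans (dist_le_diam_of_mem hFbdd hxF ha.2) hFdiam
    set q : ℝ := dist x b' / dist x a with hqdef
    have hq0 : 0 ≤ q := by positivity
    have hqT : q ≤ T := by
      have hb'ρ : dist x b' ≤ ρ := le_of_lt (by rw [dist_comm]; exact mem_ball.1 hb'B)
      rw [hqdef, div_le_iff₀ hxa0]
      rw [div_lt_iff₀ hT0, mul_comm] at hcon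
      linarith
    have hηq : η q ≤ M := le_trans (hη.mono hq0 hT0.le hqT) hMη
    have hfinal : r₁ / c ≤ M * ε₀ := by
      calc r₁ / c ≤ dist (φ x) (φ b') := himgb'
        _ ≤ η q * dist (φ x) (φ a) := h2
        _ ≤ M * ε₀ := mul_le_mul hηq hφa dist_nonneg hM0.le
    have hM' : (M:ℝ) ≠ 0 := ne_of_gt hM0
    have heq : M * ε₀ = r₁ / (2 * c) := by
      calc M * ε₀ = r₁ * M / (2 * c * M) := by rw [hε₀def]; ring
        _ = r₁ / (2 * c) := mul_div_mul_right _ _ hM'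
    rw [heq, div_le_div_iff₀ hc0 (mul_pos two_pos hc0)] at hfinal
    linarith [mul_pos hc0 hr₁]
  have hρT4 : ρ / T ≤ ρ / 4 := by
    apply div_le_div_of_nonneg_left hρ.le (by norm_num) hT4
  refine ⟨E, hxE, ?_, ?_⟩
  · -- diameter bound
    apply Metric.diam_le_of_forall_dist_le hr.le
    intro a ha a' ha'
    have h1 := claim2 a ha
    have h2 := claim2 a' ha'
    calc dist a a' ≤ dist a x + dist x a' := dist_triangle _ _ _
      _ ≤ ρ / T + ρ / T := by rw [dist_comm a x]; linarith
      _ ≤ r := by rw [hρdef] at hρT4 ⊢; linarith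
  · -- separation
    intro a ha b hb
    have hxa := claim2 a ha
    by_cases hbB : b ∈ ball x ρ
    · -- b is in the ball but its image is outside F
      have hbF : φ b ∉ F := fun h => hb ⟨hbB, h⟩
      have h1 : δ₀ ≤ dist (φ a) (φ b) := hFsep (φ a) ha.2 (φ b) hbF
      -- a is far from b'
      have hρTκ : ρ / T ≤ ρ * κ₁ / 2 := by
        rw [div_le_iff₀ hT0]
        have h2κ : 2 / κ₁ ≤ T := hTκ
        rw [div_le_iff₀ hκ₁pos] at h2κ
        linarith [mul_le_mul_of_nonneg_left h2κ hρ.le]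
      have hab' : ρ * κ₁ / 2 ≤ dist a b' := by
        have htri : dist x b' ≤ dist x a + dist a b' := dist_triangle _ _ _
        linarith [claim1]
      have hab'0 : 0 < dist a b' := lt_of_lt_of_le (by linarith [mul_pos hρ hκ₁pos]) hab'
      have hab'ne : a ≠ b' := by
        intro h
        rw [h, dist_self] at hab'0
        exact lt_irrefl 0 hab'0
      have h3 := hqs a ha.1 b hbB b' hb'B hab'ne
      have hφab' : dist (φ a) (φ b') ≤ 2 * r₁ := by
        have hφa : dist (φ a) (φ x) ≤ ε₀ := by
          rw [dist_comm]
          exact le_trans (dist_le_diam_of_mem hFbdd hxF ha.2) hFdiam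
        calc dist (φ a) (φ b') ≤ dist (φ a) (φ x) + dist (φ x) (φ b') := dist_triangle _ _ _
          _ ≤ ε₀ + r₁ := by linarith [himgb''.le]
          _ ≤ 2 * r₁ := by linarith [hε₀r₁]
      set q : ℝ := dist a b / dist a b' with hqdef
      have hq0 : 0 ≤ q := by positivity
      have h4 : η κ₂ ≤ η q := by
        rw [hκ₂]
        have h5 : δ₀ ≤ η q * (2 * r₁) := by
          calc δ₀ ≤ dist (φ a) (φ b) := h1
            _ ≤ η q * dist (φ a) (φ b') := h3
            _ ≤ η q * (2 * r₁) := mul_le_mul_of_nonneg_left hφab' (hη.nonneg hq0)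
        rw [div_le_iff₀ (by linarith : (0:ℝ) < 2 * r₁)]
        linarith
      have h6 : κ₂ ≤ q := hη.le_of_map_le hq0 hκ₂pos.le h4
      rw [hqdef, le_div_iff₀ hab'0] at h6
      have h7 : r * (κ₁ * κ₂) / 4 ≤ dist a b := by
        calc r * (κ₁ * κ₂) / 4 = κ₂ * (ρ * κ₁ / 2) := by rw [hρdef]; ring
          _ ≤ κ₂ * dist a b' := mul_le_mul_of_nonneg_left hab' hκ₂pos.le
          _ ≤ dist a b := h6
      rw [div_le_iff₀ hC0]
      have h8 : 4 ≤ C * (κ₁ * κ₂) := by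
        rw [div_le_iff₀ (mul_pos hκ₁pos hκ₂pos)] at hCκ
        exact hCκ
      have hκκ : (0:ℝ) < κ₁ * κ₂ := mul_pos hκ₁pos hκ₂pos
      have h10 : r * (κ₁ * κ₂) / 4 * (4 / (κ₁ * κ₂)) ≤ dist a b * C :=
        mul_le_mul h7 hCκ (le_of_lt (div_pos four_pos hκκ)) dist_nonneg
      have h11 : r * (κ₁ * κ₂) / 4 * (4 / (κ₁ * κ₂)) = r := by
        field_simp
      linarith
    · -- b is outside the ball
      have hbd : ρ ≤ dist x b := by
        rw [mem_ball, dist_comm] at hbB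
        linarith [not_lt.1 hbB]
      have htri : dist x b ≤ dist x a + dist a b := dist_triangle _ _ _
      have h9 : 3 * ρ / 4 ≤ dist a b := by linarith [hρT4, hxa]
      have h10 : r / C ≤ r / 4 :=
        div_le_div_of_nonneg_left hr.le (by norm_num) hC4
      rw [hρdef] at h9
      linarith
end

section
/- For every ε with 0 < ε < 1/2, the attractor X_ε ⊂ ℝ of the iterated function system {φ₁,φ₂} on ℝ given by φᵢ(x) = (1−ε)x/2 + (i−1)(1+ε)/2, i=1,2, is 4-uniformly perfect. -/
open Metric Set

/-- The maps `φᵢ(x) = (1-ε)x/2 + (i-1)(1+ε)/2`, `i = 1, 2` (indexed here by `i : Fin 2`,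
so `i = 0, 1` corresponds to `i = 1, 2`). -/
noncomputable def phi (ε : ℝ) (i : Fin 2) (x : ℝ) : ℝ :=
  (1 - ε) * x / 2 + (i : ℕ) * (1 + ε) / 2

/-- The set `X` is `c`-uniformly perfect: for every `x ∈ X` and every `r ∈ (0, diam X)`,
the set `B(x,r) \ B(x, r/c)` (taken within `X`) is nonempty. -/
def UniformlyPerfectOn {α : Type*} [PseudoMetricSpace α] (c : ℝ) (X : Set α) : Prop :=
  ∀ x ∈ X, ∀ r : ℝ, 0 < r → r < Metric.diam X →
    ∃ y ∈ X, dist y x < r ∧ r / c ≤ dist y x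

/-- Core arithmetic lemma: for `ξ` in the left piece `[0, s]` (where `s = (1-ε)/2`),
knowing the second-level location of `ξ`, one of the four distances
`ξ, s - ξ, (1+ε)/2 - ξ, 1 - ξ` lies in `[t/4, t)` for any `t ∈ (s, 1]`. -/
lemma core_arith (ε ξ t : ℝ) (hε : 0 < ε) (hε' : ε < 1/2)
    (hξ0 : 0 ≤ ξ) (hξs : ξ ≤ (1-ε)/2)
    (hlev2 : ξ ≤ ((1-ε)/2)^2 ∨ (1-ε)/2*((1+ε)/2) ≤ ξ)
    (ht : (1-ε)/2 < t) (ht1 : t ≤ 1) :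
    ∃ δ : ℝ, (δ = ξ ∨ δ = (1-ε)/2 - ξ ∨ δ = (1+ε)/2 - ξ ∨ δ = 1 - ξ) ∧
      t/4 ≤ δ ∧ δ < t := by
  by_cases h1 : 1 - ξ < t
  · exact ⟨1 - ξ, Or.inr (Or.inr (Or.inr rfl)), by nlinarith, h1⟩
  · by_cases h2 : (1+ε)/2 - ξ < t
    · by_cases h3 : t/4 ≤ (1+ε)/2 - ξ
      · exact ⟨(1+ε)/2 - ξ, Or.inr (Or.inr (Or.inl rfl)), h3, h2⟩
      · exact ⟨ξ, Or.inl rfl, by nlinarith, by nlinarith⟩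
    · rcases hlev2 with h | h
      · exact ⟨(1-ε)/2 - ξ, Or.inr (Or.inl rfl), by nlinarith, by nlinarith⟩
      · exact ⟨ξ, Or.inl rfl, by nlinarith, by nlinarith⟩

lemma key_lemma (ε : ℝ) (hε : 0 < ε) (hε' : ε < 1/2) (X : Set ℝ)
    (hXinv : X = phi ε 0 '' X ∪ phi ε 1 '' X)
    (hX01 : X ⊆ Icc 0 1) (h0X : (0:ℝ) ∈ X) (h1X : (1:ℝ) ∈ X) :
    ∀ n : ℕ, ∀ x ∈ X, ∀ t : ℝ, ((1-ε)/2)^(n+1) < t → t ≤ ((1-ε)/2)^n →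
      ∃ y ∈ X, t/4 ≤ |y - x| ∧ |y - x| < t := by
  have himg : ∀ i : Fin 2, phi ε i '' X ⊆ X := by
    intro i
    fin_cases i
    · intro z hz; rw [hXinv]; exact Set.mem_union_left _ hz
    · intro z hz; rw [hXinv]; exact Set.mem_union_right _ hz
  have hphi0 : ∀ z : ℝ, phi ε 0 z = (1-ε)/2 * z := by
    intro z; simp [phi]; ring
  have hphi1 : ∀ z : ℝ, phi ε 1 z = (1-ε)/2 * z + (1+ε)/2 := by
    intro z; simp [phi]; ring
  have hsX : (1-ε)/2 ∈ X := by
    have := himg 0 ⟨1, h1X, rfl⟩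
    rwa [hphi0 1, mul_one] at this
  have hmX : (1+ε)/2 ∈ X := by
    have := himg 1 ⟨0, h0X, rfl⟩
    rwa [hphi1 0, mul_zero, zero_add] at this
  -- first-level location
  have hpiece : ∀ z ∈ X, z ≤ (1-ε)/2 ∨ (1+ε)/2 ≤ z := by
    intro z hz
    rw [hXinv] at hz
    rcases hz with ⟨w, hw, rfl⟩ | ⟨w, hw, rfl⟩
    · left; rw [hphi0]
      have := (hX01 hw).2
      nlinarith
    · right; rw [hphi1]
      have := (hX01 hw).1
      nlinarith
  intro n
  induction n with
  | zero =>
    intro x hx t ht ht1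
    rw [pow_one] at ht
    rw [pow_zero] at ht1
    rcases hpiece x hx with hxl | hxr
    · -- left piece: x ∈ [0, s]
      have hx0 : 0 ≤ x := (hX01 hx).1
      -- second level
      have hximg : x ∈ phi ε 0 '' X := by
        rw [hXinv] at hx
        rcases hx with h | ⟨w, hw, rfl⟩
        · exact h
        · exfalso
          rw [hphi1] at hxl
          have := (hX01 hw).1
          nlinarith
      obtain ⟨w, hw, rfl⟩ := hximg
      set x := phi ε 0 w with hxdef
      have hxw : x = (1-ε)/2 * w := hphi0 w
      have hlev2 : x ≤ ((1-ε)/2)^2 ∨ (1-ε)/2*((1+ε)/2) ≤ x := by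
        rcases hpiece w hw with h | h
        · left; rw [hxw]; nlinarith
        · right; rw [hxw]; nlinarith
      obtain ⟨δ, hδeq, hδ1, hδ2⟩ := core_arith ε x t hε hε' hx0 hxl hlev2 ht ht1
      rcases hδeq with rfl | rfl | rfl | rfl
      · refine ⟨0, h0X, ?_, ?_⟩ <;>
          · rw [zero_sub, abs_neg, abs_of_nonneg hx0]; assumption
      · refine ⟨(1-ε)/2, hsX, ?_, ?_⟩ <;>
          · rw [abs_of_nonneg (by linarith)]; assumption
      · refine ⟨(1+ε)/2, hmX, ?_, ?_⟩ <;>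
          · rw [abs_of_nonneg (by linarith)]; assumption
      · refine ⟨1, h1X, ?_, ?_⟩ <;>
          · rw [abs_of_nonneg (by linarith [(hX01 hx).2])]; assumption
    · -- right piece: x ∈ [(1+ε)/2, 1]
      have hx1 : x ≤ 1 := (hX01 hx).2
      have hξ0 : 0 ≤ 1 - x := by linarith
      have hξs : 1 - x ≤ (1-ε)/2 := by linarith
      have hximg : x ∈ phi ε 1 '' X := by
        rw [hXinv] at hx
        rcases hx with ⟨w, hw, rfl⟩ | h
        · exfalso
          rw [hphi0] at hxr
          have := (hX01 hw).2
          nlinarith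
        · exact h
      obtain ⟨w, hw, hwx⟩ := hximg
      have hxw : x = (1-ε)/2 * w + (1+ε)/2 := by rw [← hwx, hphi1]
      have hlev2 : 1 - x ≤ ((1-ε)/2)^2 ∨ (1-ε)/2*((1+ε)/2) ≤ 1 - x := by
        rcases hpiece w hw with h | h
        · right; rw [hxw]; nlinarith
        · left; rw [hxw]; nlinarith
      obtain ⟨δ, hδeq, hδ1, hδ2⟩ := core_arith ε (1 - x) t hε hε' hξ0 hξs hlev2 ht ht1
      rcases hδeq with h | h | h | h
      · refine ⟨1, h1X, ?_, ?_⟩ <;>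
          · rw [abs_of_nonneg (by linarith), ← h]; assumption
      · refine ⟨(1+ε)/2, hmX, ?_, ?_⟩ <;>
          · rw [abs_of_nonpos (by linarith)]
            have : -((1+ε)/2 - x) = δ := by rw [h]; ring
            rw [this]; assumption
      · refine ⟨(1-ε)/2, hsX, ?_, ?_⟩ <;>
          · rw [abs_of_nonpos (by linarith)]
            have : -((1-ε)/2 - x) = δ := by rw [h]; ring
            rw [this]; assumption
      · refine ⟨0, h0X, ?_, ?_⟩ <;>
          · rw [zero_sub, abs_neg, abs_of_nonneg (by linarith : (0:ℝ) ≤ x)]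
            linarith
  | succ n ih =>
    intro x hx t ht ht1
    have hs0 : (0:ℝ) < (1-ε)/2 := by linarith
    obtain ⟨i, w, hw, rfl⟩ : ∃ i : Fin 2, ∃ w ∈ X, phi ε i w = x := by
      rw [hXinv] at hx
      rcases hx with ⟨w, hw, hwx⟩ | ⟨w, hw, hwx⟩
      · exact ⟨0, w, hw, hwx⟩
      · exact ⟨1, w, hw, hwx⟩
    have ht' : ((1-ε)/2)^(n+1) < t / ((1-ε)/2) := by
      rw [lt_div_iff₀ hs0]
      calc ((1-ε)/2)^(n+1) * ((1-ε)/2) = ((1-ε)/2)^(n+1+1) := by ring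
        _ < t := ht
    have ht1' : t / ((1-ε)/2) ≤ ((1-ε)/2)^n := by
      rw [div_le_iff₀ hs0]
      calc t ≤ ((1-ε)/2)^(n+1) := ht1
        _ = ((1-ε)/2)^n * ((1-ε)/2) := by ring
    obtain ⟨y, hy, hy1, hy2⟩ := ih w hw (t / ((1-ε)/2)) ht' ht1'
    have h3 : t / ((1-ε)/2) * ((1-ε)/2) = t := div_mul_cancel₀ t (ne_of_gt hs0)
    have habs : |phi ε i y - phi ε i w| = (1-ε)/2 * |y - w| := by
      have h1 : phi ε i y - phi ε i w = (1-ε)/2 * (y - w) := by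
        simp only [phi]; ring
      rw [h1, abs_mul, abs_of_nonneg hs0.le]
    refine ⟨phi ε i y, himg i ⟨y, hy, rfl⟩, ?_, ?_⟩
    · rw [habs]
      linarith [mul_le_mul_of_nonneg_right hy1 hs0.le, h3]
    · rw [habs]
      linarith [mul_lt_mul_of_pos_right hy2 hs0, h3]

/-- For `0 < ε < 1/2`, the attractor `X` of the IFS `{φ₁, φ₂}` with
`φᵢ(x) = (1-ε)x/2 + (i-1)(1+ε)/2` is `4`-uniformly perfect. -/
theorem attractor_uniformly_perfect
    (ε : ℝ) (hε : 0 < ε) (hε' : ε < 1 / 2)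
    (X : Set ℝ) (hXne : X.Nonempty) (hXcomp : IsCompact X)
    (hXinv : X = phi ε 0 '' X ∪ phi ε 1 '' X) :
    UniformlyPerfectOn 4 X := by
  have hs0 : (0:ℝ) < (1-ε)/2 := by linarith
  have hs1 : (1-ε)/2 < 1 := by linarith
  have himg : ∀ i : Fin 2, phi ε i '' X ⊆ X := by
    intro i
    fin_cases i
    · intro z hz; rw [hXinv]; exact Set.mem_union_left _ hz
    · intro z hz; rw [hXinv]; exact Set.mem_union_right _ hz
  have hphi0 : ∀ z : ℝ, phi ε 0 z = (1-ε)/2 * z := by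
    intro z; simp [phi]; ring
  have hphi1 : ∀ z : ℝ, phi ε 1 z = (1-ε)/2 * z + (1+ε)/2 := by
    intro z; simp [phi]; ring
  -- X ⊆ [0,1]
  have hX01 : X ⊆ Icc 0 1 := by
    obtain ⟨M, hM, hMg⟩ := hXcomp.exists_isGreatest hXne
    obtain ⟨m, hm, hml⟩ := hXcomp.exists_isLeast hXne
    have hM1 : M ≤ 1 := by
      rw [hXinv] at hM
      rcases hM with ⟨w, hw, hwM⟩ | ⟨w, hw, hwM⟩
      · have h1 : w ≤ M := hMg hw
        rw [hphi0] at hwM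
        nlinarith
      · have h1 : w ≤ M := hMg hw
        rw [hphi1] at hwM
        nlinarith
    have hm0 : 0 ≤ m := by
      rw [hXinv] at hm
      rcases hm with ⟨w, hw, hwm⟩ | ⟨w, hw, hwm⟩
      · have h1 : m ≤ w := hml hw
        rw [hphi0] at hwm
        nlinarith
      · have h1 : m ≤ w := hml hw
        rw [hphi1] at hwm
        nlinarith
    intro z hz
    exact ⟨le_trans hm0 (hml hz), le_trans (hMg hz) hM1⟩
  obtain ⟨x₀, hx₀⟩ := hXne
  -- 0 ∈ X
  have h0X : (0:ℝ) ∈ X := by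
    have hseq : ∀ n : ℕ, ((1-ε)/2)^n * x₀ ∈ X := by
      intro n
      induction n with
      | zero => simpa using hx₀
      | succ n ih =>
        have := himg 0 ⟨_, ih, rfl⟩
        rw [hphi0] at this
        convert this using 1
        ring
    have hlim : Filter.Tendsto (fun n : ℕ => ((1-ε)/2)^n * x₀) Filter.atTop (nhds 0) := by
      have := (tendsto_pow_atTop_nhds_zero_of_lt_one hs0.le hs1).mul_const x₀
      simpa using this
    exact hXcomp.isClosed.mem_of_tendsto hlim (Filter.Eventually.of_forall hseq)
  -- 1 ∈ X
  have h1X : (1:ℝ) ∈ X := by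
    have hseq : ∀ n : ℕ, 1 + ((1-ε)/2)^n * (x₀ - 1) ∈ X := by
      intro n
      induction n with
      | zero => simpa using hx₀
      | succ n ih =>
        have := himg 1 ⟨_, ih, rfl⟩
        rw [hphi1] at this
        convert this using 1
        ring
    have hlim : Filter.Tendsto (fun n : ℕ => 1 + ((1-ε)/2)^n * (x₀ - 1))
        Filter.atTop (nhds 1) := by
      have := ((tendsto_pow_atTop_nhds_zero_of_lt_one hs0.le hs1).mul_const
        (x₀ - 1)).const_add 1
      simpa using this
    exact hXcomp.isClosed.mem_of_tendsto hlim (Filter.Eventually.of_forall hseq)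
  -- the main argument
  intro x hx r hr hrd
  have hdiam : Metric.diam X ≤ 1 := by
    have h1 : Metric.diam X ≤ Metric.diam (Icc (0:ℝ) 1) :=
      Metric.diam_mono hX01 (isBounded_Icc 0 1)
    rwa [Real.diam_Icc (by norm_num : (0:ℝ) ≤ 1), sub_zero] at h1
  have hr1 : r < 1 := lt_of_lt_of_le hrd hdiam
  obtain ⟨n, hn1, hn2⟩ : ∃ n : ℕ, ((1-ε)/2)^(n+1) < r ∧ r ≤ ((1-ε)/2)^n := by
    have hex : ∃ n : ℕ, ((1-ε)/2)^n < r := exists_pow_lt_of_lt_one hr hs1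
    have hk0 : Nat.find hex ≠ 0 := by
      intro h
      have := Nat.find_spec hex
      rw [h, pow_zero] at this
      linarith
    obtain ⟨m, hm⟩ := Nat.exists_eq_succ_of_ne_zero hk0
    refine ⟨m, ?_, ?_⟩
    · have := Nat.find_spec hex
      rwa [hm] at this
    · have := Nat.find_min hex (by omega : m < Nat.find hex)
      exact le_of_not_gt this
  obtain ⟨y, hy, hy1, hy2⟩ := key_lemma ε hε hε' X hXinv hX01 h0X h1X n x hx r hn1 hn2
  exact ⟨y, hy, by rwa [Real.dist_eq], by rwa [Real.dist_eq]⟩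
end

section
/- Fix C>1 and ε with 0 < ε < 1/(2C+1), and let X_ε ⊂ ℝ be the attractor of the iterated function system {φ₁,φ₂} on ℝ given by φᵢ(x) = (1−ε)x/2 + (i−1)(1+ε)/2, i=1,2. Set r = (1−ε)/2. Then every subset E ⊆ X_ε with 0 ∈ E and diam E ≤ r satisfies dist(E, X_ε \ E) ≤ ε < r/C; in particular X_ε is not C-uniformly disconnected. -/
open Metric Set

/-- The distance between two sets: the infimum of distances between their points. -/
noncomputable def setDist {α : Type*} [PseudoMetricSpace α] (s t : Set α) : ℝ :=
  sInf (Set.image2 dist s t)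

/-- The set `X` is `C`-uniformly disconnected: for every `x ∈ X` and every
`r ∈ (0, diam X)` there is `E ⊆ X` with `x ∈ E`, `diam E ≤ r` and `dist(E, X \ E) ≥ r / C`. -/
def UniformlyDisconnectedOn {α : Type*} [PseudoMetricSpace α] (C : ℝ) (X : Set α) : Prop :=
  ∀ x ∈ X, ∀ r : ℝ, 0 < r → r < Metric.diam X →
    ∃ E : Set α, E ⊆ X ∧ x ∈ E ∧ Metric.diam E ≤ r ∧
      ∀ a ∈ E, ∀ b ∈ X \ E, r / C ≤ dist a b

set_option maxHeartbeats 1000000 in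
/-- For `C > 1` and `0 < ε < 1/(2C+1)`, with `X` the attractor of the IFS `{φ₁, φ₂}`,
`φᵢ(x) = (1-ε)x/2 + (i-1)(1+ε)/2`, and `r = (1-ε)/2`: every `E ⊆ X` with `0 ∈ E` and
`diam E ≤ r` satisfies `dist(E, X \ E) ≤ ε < r / C`; in particular `X` is not
`C`-uniformly disconnected. -/
theorem attractor_not_uniformly_disconnected
    (C ε : ℝ) (hC : 1 < C) (hε : 0 < ε) (hε' : ε < 1 / (2 * C + 1))
    (X : Set ℝ) (hXne : X.Nonempty) (hXcomp : IsCompact X)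
    (hXinv : X = phi ε 0 '' X ∪ phi ε 1 '' X) :
    (∀ E ⊆ X, 0 ∈ E → Metric.diam E ≤ (1 - ε) / 2 →
      setDist E (X \ E) ≤ ε) ∧
    ε < ((1 - ε) / 2) / C ∧
    ¬ UniformlyDisconnectedOn C X := by
  have hC0 : (0:ℝ) < C := by linarith
  have hε'2 : ε * (2 * C + 1) < 1 := by
    have h2C : (0:ℝ) < 2 * C + 1 := by linarith
    calc ε * (2 * C + 1) < (1 / (2 * C + 1)) * (2 * C + 1) := by
          exact mul_lt_mul_of_pos_right hε' h2C
      _ = 1 := by field_simp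
  have hε3 : ε < 1 / 3 := by nlinarith
  set r : ℝ := (1 - ε) / 2 with hrdef
  set b : ℝ := (1 + ε) / 2 with hbdef
  have hr0 : (0:ℝ) < r := by rw [hrdef]; linarith
  have hr1 : r < 1 := by rw [hrdef]; linarith
  have hrb : r + b = 1 := by rw [hrdef, hbdef]; ring
  have hεb : b = r + ε := by rw [hrdef, hbdef]; ring
  have hb0 : (0:ℝ) < b := by rw [hbdef]; linarith
  have hphi0 : ∀ x, phi ε 0 x = r * x := by
    intro x; simp [phi, hrdef]; ring
  have hphi1 : ∀ x, phi ε 1 x = r * x + b := by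
    intro x; simp [phi, hrdef, hbdef]; ring
  have hsub0 : ∀ x ∈ X, r * x ∈ X := by
    intro x hx
    have h : phi ε 0 x ∈ X := by rw [hXinv]; exact Or.inl ⟨x, hx, rfl⟩
    rwa [hphi0] at h
  have hsub1 : ∀ x ∈ X, r * x + b ∈ X := by
    intro x hx
    have h : phi ε 1 x ∈ X := by rw [hXinv]; exact Or.inr ⟨x, hx, rfl⟩
    rwa [hphi1] at h
  have hdec : ∀ x ∈ X, ∃ z ∈ X, x = r * z ∨ x = r * z + b := by
    intro x hx
    rw [hXinv] at hx
    rcases hx with ⟨z, hz, hzx⟩ | ⟨z, hz, hzx⟩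
    · exact ⟨z, hz, Or.inl (by rw [← hzx, hphi0])⟩
    · exact ⟨z, hz, Or.inr (by rw [← hzx, hphi1])⟩
  have hbddB : BddBelow X := hXcomp.bddBelow
  have hbddA : BddAbove X := hXcomp.bddAbove
  -- upper bound: X ⊆ (-∞, 1]
  have hX1 : ∀ x ∈ X, x ≤ 1 := by
    intro x hx
    have hM := hXcomp.sSup_mem hXne
    obtain ⟨z, hz, hcase⟩ := hdec _ hM
    have hzM : z ≤ sSup X := le_csSup hbddA hz
    have hxM : x ≤ sSup X := le_csSup hbddA hx
    have hM1 : sSup X ≤ 1 := by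
      rcases hcase with h | h
      · nlinarith [mul_le_mul_of_nonneg_left hzM hr0.le]
      · nlinarith [mul_le_mul_of_nonneg_left hzM hr0.le]
    linarith
  -- lower bound and 0 ∈ X
  have hm := hXcomp.sInf_mem hXne
  have hmr : sInf X ≤ r * sInf X := csInf_le hbddB (hsub0 _ hm)
  have hm0 : sInf X = 0 := by
    obtain ⟨z, hz, hcase⟩ := hdec _ hm
    have hzm : sInf X ≤ z := csInf_le hbddB hz
    rcases hcase with h | h
    · nlinarith [mul_le_mul_of_nonneg_left hzm hr0.le]
    · nlinarith [mul_le_mul_of_nonneg_left hzm hr0.le]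
  have hX0 : ∀ x ∈ X, 0 ≤ x := by
    intro x hx; rw [← hm0]; exact csInf_le hbddB hx
  have h0X : (0:ℝ) ∈ X := by rw [← hm0]; exact hm
  have h1X : (1:ℝ) ∈ X := by
    have hM := hXcomp.sSup_mem hXne
    have hM1 : sSup X ≤ 1 := le_of_eq (le_antisymm (by
      have := hX1 _ hM; linarith) (by
      have h := le_csSup hbddA (hsub1 _ hM)
      nlinarith))
    have h2 : r * sSup X + b ≤ sSup X := le_csSup hbddA (hsub1 _ hM)
    have : sSup X = 1 := by nlinarith [hX1 _ hM]
    rwa [this] at hM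
  have hbX : b ∈ X := by have := hsub1 0 h0X; simpa using this
  -- gap lemma
  have gap : ∀ n : ℕ, ∀ x ∈ X, x < 1 → ∃ y ∈ X, x < y ∧ y - x ≤ ε + r ^ n := by
    intro n
    induction n with
    | zero =>
      intro x hx hx1
      exact ⟨1, h1X, hx1, by have := hX0 x hx; simp; linarith⟩
    | succ n ih =>
      intro x hx hx1
      obtain ⟨z, hz, hcase⟩ := hdec x hx
      have hz1 : z ≤ 1 := hX1 z hz
      have hpow : (0:ℝ) ≤ r ^ n := by positivity
      have hpowS : (0:ℝ) ≤ r ^ (n + 1) := by positivity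
      rcases hcase with hxz | hxz
      · rcases lt_or_eq_of_le hz1 with h1 | h1
        · obtain ⟨y', hy', hzy', hgap⟩ := ih z hz h1
          refine ⟨r * y', hsub0 _ hy', ?_, ?_⟩
          · rw [hxz]; exact (mul_lt_mul_iff_right₀ hr0).mpr hzy'
          · rw [hxz]
            have h2 : r * (y' - z) ≤ r * (ε + r ^ n) := by
              exact mul_le_mul_of_nonneg_left hgap hr0.le
            have h3 : r ^ (n + 1) = r * r ^ n := by ring
            nlinarith
        · -- z = 1, x = r
          refine ⟨b, hbX, ?_, ?_⟩
          · rw [hxz, h1, mul_one]; linarith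
          · rw [hxz, h1, mul_one]; linarith
      · rcases lt_or_eq_of_le hz1 with h1 | h1
        · obtain ⟨y', hy', hzy', hgap⟩ := ih z hz h1
          refine ⟨r * y' + b, hsub1 _ hy', ?_, ?_⟩
          · rw [hxz]; have := (mul_lt_mul_iff_right₀ hr0).mpr hzy'; linarith
          · rw [hxz]
            have h2 : r * (y' - z) ≤ r * (ε + r ^ n) := by
              exact mul_le_mul_of_nonneg_left hgap hr0.le
            have h3 : r ^ (n + 1) = r * r ^ n := by ring
            nlinarith
        · exfalso; rw [hxz, h1, mul_one] at hx1; linarith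
  -- part 1
  have main : ∀ E ⊆ X, 0 ∈ E → Metric.diam E ≤ r → setDist E (X \ E) ≤ ε := by
    intro E hEX h0E hdiam
    have hEne : E.Nonempty := ⟨0, h0E⟩
    have hEbd : Bornology.IsBounded E := hXcomp.isBounded.subset hEX
    have hEr : ∀ p ∈ E, p ≤ r := by
      intro p hp
      have h := Metric.dist_le_diam_of_mem hEbd h0E hp
      have hp0 : 0 ≤ p := hX0 p (hEX hp)
      rw [Real.dist_eq, abs_sub_comm, abs_of_nonneg (by linarith)] at h
      linarith
    have hbE : b ∈ X \ E := by
      refine ⟨hbX, fun hbE => ?_⟩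
      have := hEr b hbE
      rw [hεb] at this; linarith
    have hbdd : BddBelow (Set.image2 dist E (X \ E)) := by
      refine ⟨0, ?_⟩
      rintro d ⟨a, ha, c, hc, rfl⟩
      exact dist_nonneg
    set s := sSup E with hsdef
    have hsX : s ∈ X := by
      have h1 : s ∈ closure E := csSup_mem_closure hEne hEbd.bddAbove
      exact closure_minimal hEX hXcomp.isClosed h1
    have hsr : s ≤ r := csSup_le hEne hEr
    unfold setDist
    by_cases hsE : s ∈ E
    · -- use gap lemma
      refine le_of_forall_pos_le_add fun δ hδ => ?_
      obtain ⟨n, hn⟩ := exists_pow_lt_of_lt_one hδ hr1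
      obtain ⟨y, hyX, hsy, hgap⟩ := gap n s hsX (by linarith)
      have hyE : y ∉ E := fun hyE => absurd (le_csSup hEbd.bddAbove hyE) (not_le.mpr hsy)
      have hmem : dist s y ∈ Set.image2 dist E (X \ E) :=
        Set.mem_image2_of_mem hsE ⟨hyX, hyE⟩
      have h2 : dist s y ≤ ε + δ := by
        rw [Real.dist_eq, abs_sub_comm, abs_of_nonneg (by linarith)]
        linarith
      exact (csInf_le hbdd hmem).trans h2
    · obtain ⟨p, hp, hps⟩ := exists_lt_of_lt_csSup hEne (show s - ε < s by linarith)
      have hpls : p ≤ s := le_csSup hEbd.bddAbove hp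
      have hmem : dist p s ∈ Set.image2 dist E (X \ E) :=
        Set.mem_image2_of_mem hp ⟨hsX, hsE⟩
      have h2 : dist p s ≤ ε := by
        rw [Real.dist_eq, abs_sub_comm, abs_of_nonneg (by linarith)]
        linarith
      exact (csInf_le hbdd hmem).trans h2
  have part2 : ε < r / C := by
    rw [lt_div_iff₀ hC0, hrdef]; nlinarith
  refine ⟨main, part2, ?_⟩
  intro hUD
  have hdiamX : Metric.diam X = 1 := by
    apply le_antisymm
    · apply Metric.diam_le_of_forall_dist_le (by norm_num)
      intro x hx y hy
      rw [Real.dist_eq, abs_le]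
      constructor <;> [nlinarith [hX0 x hx, hX1 y hy]; nlinarith [hX0 y hy, hX1 x hx]]
    · have h := Metric.dist_le_diam_of_mem hXcomp.isBounded h0X h1X
      rw [Real.dist_eq] at h
      rw [show |(0:ℝ) - 1| = 1 by norm_num] at h
      exact h
  obtain ⟨E, hEX, h0E, hdiam, hsep⟩ := hUD 0 h0X r hr0 (by rw [hdiamX]; linarith)
  have h1 := main E hEX h0E hdiam
  -- X \ E nonempty via b ∉ E
  have hEbd : Bornology.IsBounded E := hXcomp.isBounded.subset hEX
  have hEr : ∀ p ∈ E, p ≤ r := by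
    intro p hp
    have h := Metric.dist_le_diam_of_mem hEbd h0E hp
    have hp0 : 0 ≤ p := hX0 p (hEX hp)
    rw [Real.dist_eq, abs_sub_comm, abs_of_nonneg (by linarith)] at h
    linarith
  have hbE : b ∈ X \ E := by
    refine ⟨hbX, fun hbE => ?_⟩
    have := hEr b hbE
    rw [hεb] at this; linarith
  have h2 : r / C ≤ setDist E (X \ E) := by
    unfold setDist
    apply le_csInf ⟨dist 0 b, Set.mem_image2_of_mem h0E hbE⟩
    rintro d ⟨a, ha, c, hc, rfl⟩
    exact hsep a ha c hc
  linarith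
end

section
/- Let n ≥ 2 and let φ₁,…,φₙ: ℝᵐ → ℝᵐ (m ≥ 1) be contracting similarities for which there exists a nonempty bounded open set B ⊂ ℝᵐ such that the closures φ₁(B̄),…,φₙ(B̄) are pairwise disjoint and contained in B. Then the attractor X of {φ₁,…,φₙ} is a compact set which is uniformly perfect and uniformly disconnected. -/
open Metric Set

namespace AttractorAux

variable {α β : Type*}

def compW (φ : β → α → α) : List β → α → α
  | [], x => x
  | i :: w, x => φ i (compW φ w x)

@[simp] theorem compW_nil (φ : β → α → α) (x : α) : compW φ [] x = x := rfl
@[simp] theorem compW_cons (φ : β → α → α) (i : β) (w : List β) (x : α) :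
    compW φ (i :: w) x = φ i (compW φ w x) := rfl

theorem compW_append (φ : β → α → α) (w u : List β) (x : α) :
    compW φ (w ++ u) x = compW φ w (compW φ u x) := by
  induction w with
  | nil => rfl
  | cons i w ih => simp [ih]

def prodW (r : β → ℝ) (w : List β) : ℝ := (w.map r).prod

@[simp] theorem prodW_nil (r : β → ℝ) : prodW r [] = 1 := rfl
@[simp] theorem prodW_cons (r : β → ℝ) (i : β) (w : List β) :
    prodW r (i :: w) = r i * prodW r w := by simp [prodW]
theorem prodW_append (r : β → ℝ) (w u : List β) :
    prodW r (w ++ u) = prodW r w * prodW r u := by simp [prodW]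

def addrW (ℓ : α → β) (nx : α → α) : α → ℕ → List β
  | _, 0 => []
  | x, k + 1 => ℓ x :: addrW ℓ nx (nx x) k

@[simp] theorem addrW_zero (ℓ : α → β) (nx : α → α) (x : α) : addrW ℓ nx x 0 = [] := rfl
@[simp] theorem addrW_succ (ℓ : α → β) (nx : α → α) (x : α) (k : ℕ) :
    addrW ℓ nx x (k + 1) = ℓ x :: addrW ℓ nx (nx x) k := rfl

theorem addrW_length (ℓ : α → β) (nx : α → α) (x : α) (k : ℕ) :
    (addrW ℓ nx x k).length = k := by
  induction k generalizing x with
  | zero => rfl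
  | succ k ih => simp [ih]

theorem addrW_snoc (ℓ : α → β) (nx : α → α) (x : α) (k : ℕ) :
    addrW ℓ nx x (k + 1) = addrW ℓ nx x k ++ [ℓ (nx^[k] x)] := by
  induction k generalizing x with
  | zero => rfl
  | succ k ih =>
    simp only [addrW_succ, Function.iterate_succ_apply, List.cons_append]
    exact congrArg (List.cons (ℓ x)) (ih (nx x))

end AttractorAux

open AttractorAux

/-- Let `n ≥ 2` and let `φ₁, …, φₙ` be contracting similarities of `ℝᵐ` (`m ≥ 1`) for which
there is a nonempty bounded open set `B` such that the closures `φ₁(B̄), …, φₙ(B̄)` are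
pairwise disjoint and contained in `B`. Then the attractor `X` of `{φ₁, …, φₙ}` is compact,
uniformly perfect and uniformly disconnected. -/
theorem attractor_uniformly_perfect_and_disconnected
    (m : ℕ) (hm : 1 ≤ m) (n : ℕ) (hn : 2 ≤ n)
    (φ : Fin n → EuclideanSpace ℝ (Fin m) → EuclideanSpace ℝ (Fin m))
    (hsim : ∀ i, ∃ r : ℝ, 0 < r ∧ r < 1 ∧ ∀ x y, dist (φ i x) (φ i y) = r * dist x y)
    (B : Set (EuclideanSpace ℝ (Fin m))) (hBne : B.Nonempty) (hBopen : IsOpen B)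
    (hBbdd : Bornology.IsBounded B)
    (hdisj : ∀ i j, i ≠ j → Disjoint (φ i '' closure B) (φ j '' closure B))
    (hsub : ∀ i, φ i '' closure B ⊆ B)
    (X : Set (EuclideanSpace ℝ (Fin m))) (hXne : X.Nonempty) (hXcomp : IsCompact X)
    (hXinv : X = ⋃ i, φ i '' X) :
    IsCompact X ∧ (∃ c : ℝ, 1 < c ∧ UniformlyPerfectOn c X) ∧
      (∃ C : ℝ, 1 ≤ C ∧ UniformlyDisconnectedOn C X) := by
  classical
  refine ⟨hXcomp, ?_⟩
  choose r hr0 hr1 hrd using hsim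
  have hnpos : 0 < n := by omega
  haveI : Nonempty (Fin n) := ⟨⟨0, hnpos⟩⟩
  -- contraction factors
  have hrmin0 : 0 < Finset.univ.inf' Finset.univ_nonempty r :=
    (Finset.lt_inf'_iff _).mpr fun i _ => hr0 i
  set rmin : ℝ := Finset.univ.inf' Finset.univ_nonempty r with hrmindef
  have hrmin_le : ∀ i, rmin ≤ r i := fun i => Finset.inf'_le _ (Finset.mem_univ i)
  set rmax : ℝ := Finset.univ.sup' Finset.univ_nonempty r with hrmaxdef
  have hrmax1 : rmax < 1 := (Finset.sup'_lt_iff _).mpr fun i _ => hr1 i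
  have hle_rmax : ∀ i, r i ≤ rmax := fun i => Finset.le_sup' _ (Finset.mem_univ i)
  -- continuity
  have hφc : ∀ i, Continuous (φ i) := by
    intro i
    refine (LipschitzWith.of_dist_le_mul (K := ⟨r i, (hr0 i).le⟩) ?_).continuous
    intro x y
    rw [hrd i x y]
    exact le_of_eq rfl
  -- closure of B
  have hclBcomp : IsCompact (closure B) := hBbdd.isCompact_closure
  have hclBne : (closure B).Nonempty := hBne.closure
  have hAsub : ∀ i, φ i '' closure B ⊆ closure B := fun i => (hsub i).trans subset_closure
  -- φ i maps X into X
  have hφX : ∀ i, φ i '' X ⊆ X := by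
    intro i
    have h := subset_iUnion (fun j => φ j '' X) i
    rwa [← hXinv] at h
  -- X is contained in the closure of B
  have hXclB : X ⊆ closure B := by
    obtain ⟨x₀, hx₀X, hx₀max⟩ := hXcomp.exists_isMaxOn hXne
      (continuous_infDist_pt (closure B)).continuousOn
    have h0 : infDist x₀ (closure B) = 0 := by
      have hx' : x₀ ∈ ⋃ i, φ i '' X := hXinv ▸ hx₀X
      simp only [mem_iUnion, mem_image] at hx'
      obtain ⟨i, y, hyX, hyeq⟩ := hx'
      obtain ⟨p, hp, hpd⟩ := hclBcomp.exists_infDist_eq_dist hclBne y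
      have h1 : infDist x₀ (closure B) ≤ r i * infDist y (closure B) := by
        calc infDist x₀ (closure B) ≤ dist x₀ (φ i p) :=
              infDist_le_dist_of_mem (hAsub i ⟨p, hp, rfl⟩)
        _ = r i * dist y p := by rw [← hyeq, hrd]
        _ = r i * infDist y (closure B) := by rw [hpd]
      have h2 : infDist y (closure B) ≤ infDist x₀ (closure B) := hx₀max hyX
      have h3 : (0:ℝ) ≤ infDist x₀ (closure B) := infDist_nonneg
      nlinarith [hr0 i, hr1 i]
    intro x hxX
    have h4 : infDist x (closure B) ≤ 0 := h0 ▸ hx₀max hxX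
    have h5 : infDist x (closure B) = 0 := le_antisymm h4 infDist_nonneg
    exact (isClosed_closure.mem_iff_infDist_zero hclBne).mpr h5
  -- a positive separation constant between the pieces
  have hpairsep : ∀ p : Fin n × Fin n, p.1 ≠ p.2 → ∃ d : ℝ, 0 < d ∧
      ∀ a ∈ φ p.1 '' closure B, ∀ b ∈ φ p.2 '' closure B, d ≤ dist a b := by
    intro p hp
    obtain ⟨d, hd0, hd⟩ := EMetric.exists_pos_forall_lt_edist (hclBcomp.image (hφc p.1))
      (hclBcomp.image (hφc p.2)).isClosed (hdisj _ _ hp)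
    refine ⟨d, hd0, fun a ha b hb => ?_⟩
    by_contra hlt
    push_neg at hlt
    have : edist a b < ENNReal.ofReal d := edist_lt_ofReal.mpr hlt
    rw [ENNReal.ofReal_coe_nnreal] at this
    exact absurd (hd a ha b hb) (not_lt.mpr this.le)
  choose! dd hdd0 hddsep using hpairsep
  set Pairs : Finset (Fin n × Fin n) := Finset.univ.filter (fun p => p.1 ≠ p.2) with hPairsdef
  have hPne : Pairs.Nonempty := by
    refine ⟨(⟨0, by omega⟩, ⟨1, by omega⟩), ?_⟩
    simp [hPairsdef, Fin.ext_iff]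
  have hδ0 : 0 < Pairs.inf' hPne dd := by
    rw [Finset.lt_inf'_iff]
    intro p hp
    exact hdd0 p (by simpa [hPairsdef] using hp)
  set δ : ℝ := Pairs.inf' hPne dd with hδdef
  have hδle : ∀ i j, i ≠ j → ∀ a ∈ φ i '' closure B, ∀ b ∈ φ j '' closure B, δ ≤ dist a b := by
    intro i j hij a ha b hb
    have hmem : (i, j) ∈ Pairs := by simp [hPairsdef, hij]
    exact le_trans (Finset.inf'_le dd hmem) (hddsep (i, j) hij a ha b hb)
  -- facts about products
  have hρpos : ∀ w : List (Fin n), 0 < prodW r w := by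
    intro w
    induction w with
    | nil => norm_num
    | cons i w ih => simpa using mul_pos (hr0 i) ih
  have hρle1 : ∀ w : List (Fin n), prodW r w ≤ 1 := by
    intro w
    induction w with
    | nil => simp
    | cons i w ih =>
      rw [prodW_cons]
      nlinarith [hr0 i, hr1 i, hρpos w]
  -- distance scaling for words
  have hdistW : ∀ (w : List (Fin n)) (a b),
      dist (compW φ w a) (compW φ w b) = prodW r w * dist a b := by
    intro w
    induction w with
    | nil => simp
    | cons i w ih =>
      intro a b
      rw [compW_cons, compW_cons, hrd, ih, prodW_cons, mul_assoc]
  -- cylinder subsets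
  have hWX : ∀ w : List (Fin n), compW φ w '' X ⊆ X := by
    intro w
    induction w with
    | nil => rintro _ ⟨z, hz, rfl⟩; exact hz
    | cons i w ih =>
      rintro _ ⟨z, hz, rfl⟩
      exact hφX i ⟨compW φ w z, ih ⟨z, hz, rfl⟩, rfl⟩
  have hXbdd := hXcomp.isBounded
  -- exact diameter of cylinders
  have hdiamW : ∀ w : List (Fin n), diam (compW φ w '' X) = prodW r w * diam X := by
    intro w
    refine le_antisymm ?_ ?_
    · refine diam_le_of_forall_dist_le (mul_nonneg (hρpos w).le diam_nonneg) ?_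
      rintro _ ⟨a, ha, rfl⟩ _ ⟨b, hb, rfl⟩
      rw [hdistW]
      exact mul_le_mul_of_nonneg_left (dist_le_diam_of_mem hXbdd ha hb) (hρpos w).le
    · have h2 : diam X ≤ diam (compW φ w '' X) / prodW r w := by
        refine diam_le_of_forall_dist_le (div_nonneg diam_nonneg (hρpos w).le) ?_
        intro a ha b hb
        rw [le_div_iff₀ (hρpos w), mul_comm, ← hdistW]
        exact dist_le_diam_of_mem (hXbdd.subset (hWX w)) ⟨a, ha, rfl⟩ ⟨b, hb, rfl⟩
      calc prodW r w * diam X ≤ prodW r w * (diam (compW φ w '' X) / prodW r w) :=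
            mul_le_mul_of_nonneg_left h2 (hρpos w).le
      _ = diam (compW φ w '' X) := by rw [mul_comm, div_mul_cancel₀ _ (hρpos w).ne']
  -- separation of distinct cylinders of the same length
  have hSEP : ∀ w u : List (Fin n), w.length = u.length → w ≠ u →
      ∀ a ∈ compW φ w '' closure B, ∀ b ∈ compW φ u '' closure B,
        δ * prodW r w ≤ dist a b := by
    intro w
    induction w with
    | nil =>
      intro u hlen hne
      exact absurd (List.length_eq_zero_iff.mp hlen.symm).symm hne
    | cons i w ih =>
      intro u hlen hne a ha b hb
      cases u with
      | nil => simp at hlen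
      | cons j u =>
        obtain ⟨a', ha', rfl⟩ := ha
        obtain ⟨b', hb', rfl⟩ := hb
        have hWB : ∀ v : List (Fin n), compW φ v '' closure B ⊆ closure B := by
          intro v
          induction v with
          | nil => rintro _ ⟨z, hz, rfl⟩; exact hz
          | cons i₀ v ihv =>
            rintro _ ⟨z, hz, rfl⟩
            exact hAsub i₀ ⟨compW φ v z, ihv ⟨z, hz, rfl⟩, rfl⟩
        by_cases hij : i = j
        · subst hij
          have hwu : w ≠ u := fun h => hne (by rw [h])
          have hlen' : w.length = u.length := by simpa using hlen
          have key := ih u hlen' hwu (compW φ w a') ⟨a', ha', rfl⟩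
            (compW φ u b') ⟨b', hb', rfl⟩
          calc δ * prodW r (i :: w) = r i * (δ * prodW r w) := by rw [prodW_cons]; ring
          _ ≤ r i * dist (compW φ w a') (compW φ u b') :=
                mul_le_mul_of_nonneg_left key (hr0 i).le
          _ = dist (compW φ (i :: w) a') (compW φ (i :: u) b') := by
                rw [compW_cons, compW_cons, hrd]
        · have haA : compW φ (i :: w) a' ∈ φ i '' closure B :=
            ⟨compW φ w a', hWB w ⟨a', ha', rfl⟩, rfl⟩
          have hbA : compW φ (j :: u) b' ∈ φ j '' closure B :=
            ⟨compW φ u b', hWB u ⟨b', hb', rfl⟩, rfl⟩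
          calc δ * prodW r (i :: w) ≤ δ * 1 :=
                mul_le_mul_of_nonneg_left (hρle1 _) hδ0.le
          _ = δ := mul_one δ
          _ ≤ dist (compW φ (i :: w) a') (compW φ (j :: u) b') := hδle i j hij _ haA _ hbA
  -- the address functions
  have haddr : ∀ x ∈ X, ∃ (i : Fin n) (y : EuclideanSpace ℝ (Fin m)), y ∈ X ∧ φ i y = x := by
    intro x hx
    have hx' : x ∈ ⋃ i, φ i '' X := hXinv ▸ hx
    simp only [mem_iUnion, mem_image] at hx'
    obtain ⟨i, y, hy, hyx⟩ := hx'
    exact ⟨i, y, hy, hyx⟩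
  choose! ℓ nx hnxX hnxφ using haddr
  have hmem : ∀ (k : ℕ) (x), x ∈ X → x ∈ compW φ (addrW ℓ nx x k) '' X := by
    intro k
    induction k with
    | zero => intro x hx; simpa using hx
    | succ k ih =>
      intro x hx
      obtain ⟨z, hz, hzeq⟩ := ih (nx x) (hnxX x hx)
      exact ⟨z, hz, by rw [addrW_succ, compW_cons, hzeq, hnxφ x hx]⟩
  have hρpow : ∀ (k : ℕ) (x : EuclideanSpace ℝ (Fin m)),
      prodW r (addrW ℓ nx x k) ≤ rmax ^ k := by
    intro k
    induction k with
    | zero => intro x; simp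
    | succ k ih =>
      intro x
      rw [addrW_succ, prodW_cons, pow_succ']
      have hrmax0 : (0:ℝ) < rmax := lt_of_lt_of_le (hr0 ⟨0, hnpos⟩) (hle_rmax _)
      exact mul_le_mul (hle_rmax _) (ih (nx x)) (hρpos _).le hrmax0.le
  -- the constant
  set c : ℝ := max (diam X / (δ * rmin)) 1 + 1 with hcdef
  have hc1 : (1:ℝ) < c := by
    have := le_max_right (diam X / (δ * rmin)) 1
    simp only [hcdef]
    linarith
  have hc0 : (0:ℝ) < c := by linarith
  -- the key construction
  have key : ∀ x ∈ X, ∀ t : ℝ, 0 < t → t < diam X →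
      ∃ (w : List (Fin n)) (i : Fin n), x ∈ compW φ (w ++ [i]) '' X ∧
        diam (compW φ w '' X) < t ∧ t / c ≤ δ * prodW r w := by
    intro x hx t ht0 htD
    have hD0 : 0 < diam X := lt_trans ht0 htD
    have hPex : ∃ k, diam (compW φ (addrW ℓ nx x k) '' X) < t := by
      obtain ⟨k, hk⟩ := exists_pow_lt_of_lt_one (div_pos ht0 hD0) hrmax1
      refine ⟨k, ?_⟩
      calc diam (compW φ (addrW ℓ nx x k) '' X) = prodW r (addrW ℓ nx x k) * diam X :=
            hdiamW _
      _ ≤ rmax ^ k * diam X := mul_le_mul_of_nonneg_right (hρpow k x) diam_nonneg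
      _ < t := (lt_div_iff₀ hD0).mp hk
    have hk0 : Nat.find hPex ≠ 0 := by
      intro h
      have hspec := Nat.find_spec hPex
      rw [h] at hspec
      have him : compW φ (addrW ℓ nx x 0) '' X = X := by
        ext z; simp
      rw [him] at hspec
      linarith
    obtain ⟨k', hk'⟩ : ∃ k', Nat.find hPex = k' + 1 := ⟨Nat.find hPex - 1, by omega⟩
    have hkspec : diam (compW φ (addrW ℓ nx x (k' + 1)) '' X) < t := by
      have := Nat.find_spec hPex
      rwa [hk'] at this
    have hkmin : ¬ diam (compW φ (addrW ℓ nx x k') '' X) < t :=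
      Nat.find_min hPex (by omega)
    refine ⟨addrW ℓ nx x (k' + 1), ℓ (nx^[k' + 1] x), ?_, hkspec, ?_⟩
    · have h := hmem (k' + 2) x hx
      rwa [addrW_snoc ℓ nx x (k' + 1)] at h
    · have h1 : t ≤ prodW r (addrW ℓ nx x k') * diam X := by
        have h := not_lt.mp hkmin
        rwa [hdiamW] at h
      have h3 : rmin * prodW r (addrW ℓ nx x k') ≤ prodW r (addrW ℓ nx x (k' + 1)) := by
        rw [addrW_snoc, prodW_append, prodW_cons, prodW_nil, mul_one, mul_comm]
        exact mul_le_mul_of_nonneg_left (hrmin_le _) (hρpos _).le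
      have hδrmin : (0:ℝ) < δ * rmin := mul_pos hδ0 hrmin0
      have hcD : diam X ≤ c * (δ * rmin) := by
        have h4 : diam X / (δ * rmin) ≤ c := by
          have := le_max_left (diam X / (δ * rmin)) 1
          simp only [hcdef]
          linarith
        calc diam X = diam X / (δ * rmin) * (δ * rmin) := by field_simp
        _ ≤ c * (δ * rmin) := mul_le_mul_of_nonneg_right h4 hδrmin.le
      have hchain : t / c ≤ δ * (rmin * prodW r (addrW ℓ nx x k')) := by
        rw [div_le_iff₀ hc0]
        nlinarith [mul_le_mul_of_nonneg_right hcD (hρpos (addrW ℓ nx x k')).le, h1,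
          hρpos (addrW ℓ nx x k')]
      calc t / c ≤ δ * (rmin * prodW r (addrW ℓ nx x k')) := hchain
      _ ≤ δ * prodW r (addrW ℓ nx x (k' + 1)) := mul_le_mul_of_nonneg_left h3 hδ0.le
  -- conclusion
  refine ⟨⟨c, hc1, ?_⟩, ⟨c, hc1.le, ?_⟩⟩
  · -- uniformly perfect
    intro x hx t ht0 htD
    obtain ⟨w, i, hxw, hdw, hbound⟩ := key x hx t ht0 htD
    obtain ⟨j, hji⟩ := Fintype.exists_ne_of_one_lt_card (by simp; omega) i
    obtain ⟨x₀, hx₀⟩ := hXne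
    obtain ⟨z, hzX, hzeq⟩ := hxw
    have hxw' : x = compW φ w (φ i z) := by
      rw [← hzeq, compW_append]
      simp
    have hyX : compW φ w (φ j x₀) ∈ X := hWX w ⟨φ j x₀, hφX j ⟨x₀, hx₀, rfl⟩, rfl⟩
    refine ⟨compW φ w (φ j x₀), hyX, ?_, ?_⟩
    · have hyE : compW φ w (φ j x₀) ∈ compW φ w '' X := ⟨φ j x₀, hφX j ⟨x₀, hx₀, rfl⟩, rfl⟩
      have hxE : x ∈ compW φ w '' X := ⟨φ i z, hφX i ⟨z, hzX, rfl⟩, hxw'.symm⟩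
      exact lt_of_le_of_lt (dist_le_diam_of_mem (hXbdd.subset (hWX w)) hyE hxE) hdw
    · have hsep : δ ≤ dist (φ j x₀) (φ i z) :=
        hδle j i hji _ ⟨x₀, hXclB hx₀, rfl⟩ _ ⟨z, hXclB hzX, rfl⟩
      calc t / c ≤ δ * prodW r w := hbound
      _ ≤ dist (φ j x₀) (φ i z) * prodW r w :=
            mul_le_mul_of_nonneg_right hsep (hρpos w).le
      _ = dist (compW φ w (φ j x₀)) x := by rw [hxw', hdistW]; ring
  · -- uniformly disconnected
    intro x hx t ht0 htD
    obtain ⟨w, i, hxw, hdw, hbound⟩ := key x hx t ht0 htD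
    have hWB : ∀ v : List (Fin n), compW φ v '' closure B ⊆ closure B := by
      intro v
      induction v with
      | nil => rintro _ ⟨z, hz, rfl⟩; exact hz
      | cons i₀ v ihv =>
        rintro _ ⟨z, hz, rfl⟩
        exact hAsub i₀ ⟨compW φ v z, ihv ⟨z, hz, rfl⟩, rfl⟩
    refine ⟨compW φ w '' X, hWX w, ?_, hdw.le, ?_⟩
    · obtain ⟨z, hz, hzeq⟩ := hxw
      exact ⟨φ i z, hφX i ⟨z, hz, rfl⟩, by rw [← hzeq, compW_append]; simp⟩
    · intro a ha b hb
      obtain ⟨hbX, hbE⟩ := hb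
      have hu := hmem w.length b hbX
      have hlen : (addrW ℓ nx b w.length).length = w.length := addrW_length ℓ nx b w.length
      have hneq : w ≠ addrW ℓ nx b w.length := by
        intro h
        rw [← h] at hu
        exact hbE hu
      have haB : a ∈ compW φ w '' closure B := by
        obtain ⟨za, hza, hzaeq⟩ := ha
        exact ⟨za, hXclB hza, hzaeq⟩
      have hbB : b ∈ compW φ (addrW ℓ nx b w.length) '' closure B := by
        obtain ⟨zb, hzb, hzbeq⟩ := hu
        exact ⟨zb, hXclB hzb, hzbeq⟩
      calc t / c ≤ δ * prodW r w := hbound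
      _ ≤ dist a b := hSEP w _ hlen.symm hneq a haB b hbB
end

section
/- Let n ≥ 1 and let X ⊂ ℝⁿ be a compact set with at least two points which is C-uniformly disconnected for some C ≥ 1. Then X is porous: there exists α ∈ (0,1) such that for every x ∈ X and every r ∈ (0, diam X) there exists a point z ∈ B(x,r) with B(z, αr) ∩ X = ∅. -/
open Metric Set

/-- A compact subset of `ℝⁿ` with at least two points that is `C`-uniformly disconnected is
porous: there is `α ∈ (0,1)` such that for every `x ∈ X` and every `r ∈ (0, diam X)` there
is a point `z ∈ B(x,r)` with `B(z, αr) ∩ X = ∅`. -/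
theorem porous_of_uniformlyDisconnected
    (n : ℕ) (hn : 1 ≤ n)
    (X : Set (EuclideanSpace ℝ (Fin n))) (hXcomp : IsCompact X)
    (hX2 : ∃ x ∈ X, ∃ y ∈ X, x ≠ y)
    (C : ℝ) (hC : 1 ≤ C) (hud : UniformlyDisconnectedOn C X) :
    ∃ α : ℝ, 0 < α ∧ α < 1 ∧
      ∀ x ∈ X, ∀ r : ℝ, 0 < r → r < Metric.diam X →
        ∃ z ∈ Metric.ball x r, Metric.ball z (α * r) ∩ X = ∅ := by
  have hC0 : (0:ℝ) < C := lt_of_lt_of_le one_pos hC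
  refine ⟨1 / (8 * C), by positivity, ?_, ?_⟩
  · rw [div_lt_one (by positivity)]
    linarith
  intro x hx r hr hrd
  -- apply uniform disconnectedness at scale r/2
  obtain ⟨E, hEX, hxE, hdiamE, hgap⟩ :=
    hud x hx (r / 2) (by linarith) (by linarith)
  have hgap' : ∀ a ∈ E, ∀ b ∈ X \ E, r / (2 * C) ≤ dist a b := by
    intro a ha b hb
    have := hgap a ha b hb
    calc r / (2 * C) = r / 2 / C := by ring
    _ ≤ dist a b := this
  -- a unit vector
  set u : EuclideanSpace ℝ (Fin n) := EuclideanSpace.single ⟨0, hn⟩ (1:ℝ) with hu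
  have hnu : ‖u‖ = 1 := by
    rw [hu, EuclideanSpace.norm_single]; norm_num
  have hEb : Bornology.IsBounded E := hXcomp.isBounded.subset hEX
  have hEne : E.Nonempty := ⟨x, hxE⟩
  -- the function t ↦ infDist (x + t • u) E
  set f : ℝ → ℝ := fun t => Metric.infDist (x + t • u) E with hf
  have hfc : Continuous f := by
    exact Metric.continuous_infDist_pt E |>.comp (by continuity)
  have hf0 : f 0 = 0 := by
    simp [hf, Metric.infDist_zero_of_mem hxE]
  set T : ℝ := r / 2 + r / (4 * C) with hT
  have hT0 : 0 ≤ T := by positivity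
  have hfT : r / (4 * C) ≤ f T := by
    by_contra h
    push_neg at h
    obtain ⟨e, he, hlt⟩ := (Metric.infDist_lt_iff hEne).mp h
    have hxe : dist x e ≤ r / 2 :=
      le_trans (Metric.dist_le_diam_of_mem hEb hxE he) hdiamE
    have hTx : dist (x + T • u) x = T := by
      rw [dist_eq_norm]
      simp [norm_smul, hnu, abs_of_nonneg hT0]
    have := dist_triangle (x + T • u) e x
    rw [dist_comm e x] at this
    have h1 : dist (x + T • u) x ≤ dist (x + T • u) e + dist x e := this
    rw [hTx, hT] at h1
    linarith
  -- IVT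
  have hmem : r / (4 * C) ∈ Set.Icc (f 0) (f T) := by
    constructor
    · rw [hf0]; positivity
    · exact hfT
  obtain ⟨t, ht, hft⟩ := intermediate_value_Icc hT0 hfc.continuousOn hmem
  set z := x + t • u with hz
  have hzE : Metric.infDist z E = r / (4 * C) := hft
  refine ⟨z, ?_, ?_⟩
  · -- z ∈ ball x r
    rw [Metric.mem_ball, dist_eq_norm, hz]
    simp only [add_sub_cancel_left]
    rw [norm_smul, hnu, mul_one, Real.norm_eq_abs, abs_of_nonneg ht.1]
    have : r / (4 * C) ≤ r / 4 := by
      apply div_le_div_of_nonneg_left (le_of_lt hr) (by norm_num)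
      linarith
    calc t ≤ T := ht.2
    _ = r / 2 + r / (4 * C) := rfl
    _ ≤ r / 2 + r / 4 := by linarith
    _ < r := by linarith
  · -- the ball misses X
    ext p
    simp only [Set.mem_inter_iff, Metric.mem_ball, Set.mem_empty_iff_false, iff_false, not_and]
    intro hpz hpX
    have hαr : 1 / (8 * C) * r = r / (8 * C) := by ring
    rw [hαr] at hpz
    by_cases hpE : p ∈ E
    · have : r / (4 * C) ≤ dist z p := hzE ▸ Metric.infDist_le_dist_of_mem hpE
      rw [dist_comm] at hpz
      have h8 : r / (8 * C) < r / (4 * C) := by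
        apply div_lt_div_of_pos_left hr (by positivity) (by linarith)
      linarith
    · -- p ∈ X \ E
      have hgapz : Metric.infDist z E < r / (2 * C) - dist z p := by
        rw [hzE]
        rw [dist_comm] at hpz
        have h8 : r / (8 * C) ≤ r / (4 * C) := by
          apply div_le_div_of_nonneg_left (le_of_lt hr) (by positivity) (by linarith)
        have : r / (4 * C) + r / (4 * C) = r / (2 * C) := by ring
        linarith
      obtain ⟨e, he, hze⟩ := (Metric.infDist_lt_iff hEne).mp hgapz
      have := hgap' e he p ⟨hpX, hpE⟩
      have htri := dist_triangle e z p
      rw [dist_comm e z] at htri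
      linarith
end
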